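/- For all real numbers p, q, n with 0 < p ≤ q < 1 and n ≥ 1, the binary Kullback–Leibler divergence satisfies kl(p/n, q/n) ≤ (1/n) · kl(p, q). -/

import Mathlib

/-- Binary (Bernoulli) Kullback–Leibler divergence:
`kl(p,q) = p·log(p/q) + (1−p)·log((1−p)/(1−q))`. -/
noncomputable def klBin (p q : ℝ) : ℝ :=
  p * Real.log (p / q) + (1 - p) * Real.log ((1 - p) / (1 - q))

private lemma klAux (c : ℝ) (hc : 0 ≤ c) {u v : ℝ} (hu : 0 < u) (huv : u ≤ v) :
    (v + c) * (Real.log (v + c) - Real.log v) ≤ (u + c) * (Real.log (u + c) - Real.log u) := by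
  set f : ℝ → ℝ := fun x => (x + c) * (Real.log (x + c) - Real.log x) with hf
  have key : ∀ x : ℝ, 0 < x → HasDerivAt f
      (1 * (Real.log (x + c) - Real.log x) + (x + c) * (1 / (x + c) - 1 / x)) x := by
    intro x hx
    have hxc : 0 < x + c := by linarith
    have h1 : HasDerivAt (fun y : ℝ => Real.log (y + c)) (1 / (x + c)) x := by
      have := (Real.hasDerivAt_log hxc.ne').comp x ((hasDerivAt_id x).add_const c)
      simpa [one_div, Function.comp_def] using this
    have h2 : HasDerivAt (fun y : ℝ => Real.log (y + c) - Real.log y) (1 / (x + c) - 1 / x) x := by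
      simpa [one_div, Pi.sub_def] using h1.sub (Real.hasDerivAt_log hx.ne')
    have h3 : HasDerivAt (fun y : ℝ => y + c) 1 x := (hasDerivAt_id x).add_const c
    exact h3.mul h2
  have hant : AntitoneOn f (Set.Ici u) := by
    apply antitoneOn_of_deriv_nonpos (convex_Ici u)
    · intro x hx
      have hx0 : 0 < x := lt_of_lt_of_le hu hx
      exact (key x hx0).differentiableAt.continuousAt.continuousWithinAt
    · intro x hx
      rw [interior_Ici] at hx
      have hx0 : 0 < x := lt_trans hu hx
      exact (key x hx0).differentiableAt.differentiableWithinAt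
    · intro x hx
      rw [interior_Ici] at hx
      have hx0 : 0 < x := lt_trans hu hx
      have hxc : 0 < x + c := by linarith
      rw [(key x hx0).deriv]
      have hlog : Real.log (x + c) - Real.log x ≤ (x + c) / x - 1 := by
        have h := Real.log_le_sub_one_of_pos (show 0 < (x + c) / x by positivity)
        rwa [Real.log_div hxc.ne' hx0.ne'] at h
      have hfield : (x + c) * (1 / (x + c) - 1 / x) = 1 - (x + c) / x := by
        field_simp
      nlinarith [hlog]
  exact hant (Set.self_mem_Ici) huv huv

/-- For all real `p, q, n` with `0 < p ≤ q < 1` and `n ≥ 1`,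
`kl(p/n, q/n) ≤ (1/n) · kl(p, q)`. -/
theorem klBin_div_le (p q n : ℝ) (hp : 0 < p) (hpq : p ≤ q) (hq : q < 1) (hn : 1 ≤ n) :
    klBin (p / n) (q / n) ≤ (1 / n) * klBin p q := by
  have hn0 : 0 < n := lt_of_lt_of_le one_pos hn
  have hq0 : 0 < q := lt_of_lt_of_le hp hpq
  have h1q : 0 < 1 - q := by linarith
  have hnq : 0 < n - q := by linarith
  have hnp : 0 < n - p := by linarith
  have h1p : 0 < 1 - p := by linarith
  have key := klAux (q - p) (by linarith) h1q (by linarith : 1 - q ≤ n - q)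
  have e1 : n - q + (q - p) = n - p := by ring
  have e2 : 1 - q + (q - p) = 1 - p := by ring
  rw [e1, e2] at key
  rw [← Real.log_div hnp.ne' hnq.ne', ← Real.log_div h1p.ne' h1q.ne'] at key
  unfold klBin
  have ed1 : p / n / (q / n) = p / q := by field_simp
  have ed2 : (1 - p / n) / (1 - q / n) = (n - p) / (n - q) := by
    rw [show (1:ℝ) - p / n = (n - p) / n by field_simp,
        show (1:ℝ) - q / n = (n - q) / n by field_simp]
    rw [div_div_div_cancel_right₀ hn0.ne']
  rw [ed1, ed2]
  have ep : (1 : ℝ) - p / n = (n - p) / n := by field_simp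
  rw [ep]
  rw [mul_add]
  have hA : p / n * Real.log (p / q) = 1 / n * (p * Real.log (p / q)) := by ring
  rw [hA]
  have hB : (n - p) / n * Real.log ((n - p) / (n - q)) ≤
      1 / n * ((1 - p) * Real.log ((1 - p) / (1 - q))) := by
    rw [div_mul_eq_mul_div, div_le_iff₀ hn0] at *
    calc (n - p) * Real.log ((n - p) / (n - q)) ≤ (1 - p) * Real.log ((1 - p) / (1 - q)) := key
    _ = 1 / n * ((1 - p) * Real.log ((1 - p) / (1 - q))) * n := by field_simp
  linarith
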